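/- If G is a K_{ω+1}-free simple graph, where ω ≥ 2 is the clique number of G, then the number c_ω(G) of ω-cliques satisfies c_ω(G) ≤ (1/(ω−1)) · c_{ω−1}(G)²/4, where c_{ω−1}(G) is the number of (ω−1)-cliques of G. -/

import Mathlib

open Finset

section CliqueMantelAux

variable {V : Type*} [Fintype V] [DecidableEq V] {G : SimpleGraph V} [DecidableRel G.Adj]

private lemma cm_subclique {n m : ℕ} {K S : Finset V} (hK : K ∈ G.cliqueFinset n)
    (hSK : S ⊆ K) (hcard : S.card = m) : S ∈ G.cliqueFinset m := by
  rw [SimpleGraph.mem_cliqueFinset_iff] at *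
  exact ⟨hK.isClique.subset hSK, hcard⟩

/-- The `(r+1)`-cliques contained in an `(r+2)`-clique `K` are exactly the
`(r+1)`-subsets of `K`. -/
private lemma cm_filter_eq_powersetCard {r : ℕ} {K : Finset V}
    (hK : K ∈ G.cliqueFinset (r+2)) :
    (G.cliqueFinset (r+1)).filter (fun S => S ⊆ K) = K.powersetCard (r+1) := by
  ext S
  simp only [Finset.mem_filter, Finset.mem_powersetCard]
  constructor
  · rintro ⟨h1, h2⟩
    exact ⟨h2, (SimpleGraph.mem_cliqueFinset_iff.1 h1).card_eq⟩
  · rintro ⟨h1, h2⟩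
    exact ⟨cm_subclique hK h1 h2, h1⟩

/-- The vertices extending `S` to an `(r+2)`-clique. -/
private def cm_ext (G : SimpleGraph V) [DecidableRel G.Adj] (r : ℕ) (S : Finset V) :
    Finset V :=
  Finset.univ.filter (fun v => v ∉ S ∧ insert v S ∈ G.cliqueFinset (r+2))

/-- The number of `(r+2)`-cliques containing `S`. -/
private def cm_D (G : SimpleGraph V) [DecidableRel G.Adj] (r : ℕ) (S : Finset V) : ℕ :=
  ((G.cliqueFinset (r+2)).filter (fun K => S ⊆ K)).card

private lemma cm_D_eq_ext {r : ℕ} {S : Finset V} (hS : S.card = r+1) :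
    cm_D G r S = (cm_ext G r S).card := by
  symm
  apply Finset.card_bij (fun v _ => insert v S)
  · intro v hv
    simp only [cm_ext, Finset.mem_filter, Finset.mem_univ, true_and] at hv
    exact Finset.mem_filter.2 ⟨hv.2, Finset.subset_insert _ _⟩
  · intro v₁ hv₁ v₂ hv₂ h
    simp only [cm_ext, Finset.mem_filter, Finset.mem_univ, true_and] at hv₁ hv₂
    have hmem : v₁ ∈ insert v₂ S := h ▸ Finset.mem_insert_self v₁ S
    rcases Finset.mem_insert.1 hmem with h' | h'
    · exact h'
    · exact absurd h' hv₁.1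
  · intro K hK
    rw [Finset.mem_filter] at hK
    obtain ⟨hK1, hK2⟩ := hK
    have hKcard : K.card = r + 2 := (SimpleGraph.mem_cliqueFinset_iff.1 hK1).card_eq
    have hsd : (K \ S).card = 1 := by
      rw [Finset.card_sdiff_of_subset hK2, hKcard, hS]; omega
    obtain ⟨v, hv⟩ := Finset.card_eq_one.1 hsd
    have hvKS : v ∈ K \ S := hv ▸ Finset.mem_singleton_self v
    have hvS : v ∉ S := (Finset.mem_sdiff.1 hvKS).2
    have hins : insert v S ⊆ K := Finset.insert_subset (Finset.mem_sdiff.1 hvKS).1 hK2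
    have heq : insert v S = K := by
      apply Finset.eq_of_subset_of_card_le hins
      rw [hKcard, Finset.card_insert_of_notMem hvS, hS]
    refine ⟨v, ?_, heq⟩
    simp only [cm_ext, Finset.mem_filter, Finset.mem_univ, true_and]
    exact ⟨hvS, heq ▸ hK1⟩

/-- Since `G` is `K_{r+3}`-free, a vertex `v ∉ K` can extend at most one `(r+1)`-subset
of the `(r+2)`-clique `K` to an `(r+2)`-clique. -/
private lemma cm_unique_ext {r : ℕ} (hfree : G.CliqueFree (r+3)) {K : Finset V}
    (hK : K ∈ G.cliqueFinset (r+2)) {S S' : Finset V} {v : V}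
    (hS : S ⊆ K) (hScard : S.card = r+1) (hS' : S' ⊆ K) (hS'card : S'.card = r+1)
    (hvK : v ∉ K)
    (hv : insert v S ∈ G.cliqueFinset (r+2)) (hv' : insert v S' ∈ G.cliqueFinset (r+2)) :
    S = S' := by
  by_contra hne
  have hKcard : K.card = r + 2 := (SimpleGraph.mem_cliqueFinset_iff.1 hK).card_eq
  have hcup : S ∪ S' = K := by
    have hsub : S ∪ S' ⊆ K := Finset.union_subset hS hS'
    have hgt : r + 2 ≤ (S ∪ S').card := by
      by_contra hlt
      push_neg at hlt
      have h2 : S = S ∪ S' :=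
        Finset.eq_of_subset_of_card_le Finset.subset_union_left (by omega)
      have h3 : S' ⊆ S := h2 ▸ Finset.subset_union_right
      exact hne (Finset.eq_of_subset_of_card_le h3 (by omega)).symm
    exact Finset.eq_of_subset_of_card_le hsub (by omega)
  have hclK : G.IsClique (insert v K : Finset V) := by
    have hadj : ∀ b ∈ K, v ≠ b → G.Adj v b := by
      intro b hb hbv
      rw [← hcup] at hb
      rcases Finset.mem_union.1 hb with hbS | hbS'
      · exact (SimpleGraph.mem_cliqueFinset_iff.1 hv).isClique
          (by simp) (by simp [hbS]) hbv
      · exact (SimpleGraph.mem_cliqueFinset_iff.1 hv').isClique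
          (by simp) (by simp [hbS']) hbv
    have := (SimpleGraph.mem_cliqueFinset_iff.1 hK).isClique.insert hadj
    simpa using this
  have hbig : G.IsNClique (r+3) (insert v K) :=
    ⟨hclK, by rw [Finset.card_insert_of_notMem hvK, hKcard]⟩
  exact hfree _ hbig

/-- Key counting bound via an injection: for each `(r+2)`-clique `K`,
`(r+1) · Σ_{S ⊂ K, |S| = r+1} #{v ∉ K extending S}` is at most the number of
`(r+1)`-cliques not contained in `K`. -/
private lemma cm_key_count {r : ℕ} (hfree : G.CliqueFree (r+3)) {K : Finset V}
    (hK : K ∈ G.cliqueFinset (r+2)) :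
    (∑ S ∈ K.powersetCard (r+1), ((cm_ext G r S).filter (fun v => v ∉ K)).card) * (r+1)
      ≤ ((G.cliqueFinset (r+1)).filter (fun T => ¬ T ⊆ K)).card := by
  classical
  have hcard : ((K.powersetCard (r+1)).sigma
      (fun S => ((cm_ext G r S).filter (fun v => v ∉ K)) ×ˢ S)).card
      = (∑ S ∈ K.powersetCard (r+1),
          ((cm_ext G r S).filter (fun v => v ∉ K)).card) * (r+1) := by
    rw [Finset.card_sigma, Finset.sum_mul]
    apply Finset.sum_congr rfl
    intro S hS
    rw [Finset.card_product, (Finset.mem_powersetCard.1 hS).2]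
  rw [← hcard]
  apply Finset.card_le_card_of_injOn (fun p => insert p.2.1 (p.1.erase p.2.2))
  · intro p hp
    rw [Finset.mem_coe] at hp ⊢
    obtain ⟨S, v, u⟩ := p
    simp only [Finset.mem_sigma, Finset.mem_product, Finset.mem_filter, cm_ext,
      Finset.mem_univ, true_and] at hp
    obtain ⟨hS, ⟨⟨hvS, hins⟩, hvK⟩, hu⟩ := hp
    rw [Finset.mem_powersetCard] at hS
    have hveK : v ∉ S.erase u := fun h => hvS (Finset.mem_of_mem_erase h)
    have hcardT : (insert v (S.erase u)).card = r+1 := by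
      rw [Finset.card_insert_of_notMem hveK, Finset.card_erase_of_mem hu, hS.2]; omega
    refine Finset.mem_filter.2 ⟨?_, ?_⟩
    · refine cm_subclique hins ?_ hcardT
      intro x hx
      rcases Finset.mem_insert.1 hx with rfl | hx
      · exact Finset.mem_insert_self _ _
      · exact Finset.mem_insert_of_mem (Finset.mem_of_mem_erase hx)
    · intro hsub
      exact hvK (hsub (Finset.mem_insert_self _ _))
  · rintro ⟨S, v, u⟩ hp ⟨S', v', u'⟩ hq heq
    rw [Finset.mem_coe] at hp hq
    simp only [Finset.mem_sigma, Finset.mem_product, Finset.mem_filter, cm_ext,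
      Finset.mem_univ, true_and] at hp hq
    obtain ⟨hS, ⟨⟨hvS, hins⟩, hvK⟩, hu⟩ := hp
    obtain ⟨hS', ⟨⟨hvS', hins'⟩, hvK'⟩, hu'⟩ := hq
    rw [Finset.mem_powersetCard] at hS hS'
    simp only at heq
    -- v = v'
    have hvv : v = v' := by
      have h1 : v ∈ insert v' (S'.erase u') := heq ▸ Finset.mem_insert_self v _
      rcases Finset.mem_insert.1 h1 with h | h
      · exact h
      · exact absurd (hS'.1 (Finset.mem_of_mem_erase h)) hvK
    subst hvv
    -- S = S'
    have hSS : S = S' := cm_unique_ext hfree hK hS.1 hS.2 hS'.1 hS'.2 hvK hins hins'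
    subst hSS
    -- u = u'
    have hveK : v ∉ S.erase u := fun h => hvS (Finset.mem_of_mem_erase h)
    have hveK' : v ∉ S.erase u' := fun h => hvS (Finset.mem_of_mem_erase h)
    have herase : S.erase u = S.erase u' := by
      have h2 := congrArg (fun t => Finset.erase t v) heq
      simpa [Finset.erase_insert hveK, Finset.erase_insert hveK'] using h2
    have huu : u = u' := by
      by_contra hne
      have : u ∈ S.erase u' := Finset.mem_erase.2 ⟨hne, hu⟩
      rw [← herase] at this
      exact Finset.notMem_erase u S this
    subst huu
    rfl

/-- Splitting the extension count for `S ⊂ K`: exactly one extending vertex lies in `K`. -/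
private lemma cm_ext_split {r : ℕ} {K S : Finset V} (hK : K ∈ G.cliqueFinset (r+2))
    (hS : S ∈ K.powersetCard (r+1)) :
    (cm_ext G r S).card = ((cm_ext G r S).filter (fun v => v ∉ K)).card + 1 := by
  rw [Finset.mem_powersetCard] at hS
  have hKcard : K.card = r + 2 := (SimpleGraph.mem_cliqueFinset_iff.1 hK).card_eq
  have hone : ((cm_ext G r S).filter (fun v => ¬ v ∉ K)).card = 1 := by
    have heq : (cm_ext G r S).filter (fun v => ¬ v ∉ K) = K \ S := by
      ext v
      simp only [cm_ext, Finset.mem_filter, Finset.mem_univ, true_and, not_not,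
        Finset.mem_sdiff]
      constructor
      · rintro ⟨⟨hvS, _⟩, hvK⟩
        exact ⟨hvK, hvS⟩
      · rintro ⟨hvK, hvS⟩
        refine ⟨⟨hvS, ?_⟩, hvK⟩
        have hsub : insert v S ⊆ K := Finset.insert_subset hvK hS.1
        have : insert v S = K := Finset.eq_of_subset_of_card_le hsub
          (by rw [hKcard, Finset.card_insert_of_notMem hvS, hS.2])
        rw [this]; exact hK
    rw [heq, Finset.card_sdiff_of_subset hS.1, hKcard, hS.2]; omega
  have hsplit := Finset.card_filter_add_card_filter_not
    (s := cm_ext G r S) (p := fun v => v ∉ K)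
  omega

/-- Double counting swap. -/
private lemma cm_swap {r : ℕ} (w : Finset V → ℕ) :
    ∑ S ∈ G.cliqueFinset (r+1), cm_D G r S * w S
      = ∑ K ∈ G.cliqueFinset (r+2),
          ∑ S ∈ (G.cliqueFinset (r+1)).filter (fun S => S ⊆ K), w S := by
  have hterm : ∀ S, cm_D G r S * w S
      = ∑ K ∈ G.cliqueFinset (r+2), if S ⊆ K then w S else 0 := by
    intro S
    rw [cm_D, Finset.card_filter, Finset.sum_mul]
    simp [ite_mul]
  simp_rw [hterm, Finset.sum_filter]
  exact Finset.sum_comm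

end CliqueMantelAux

/-- Clique Mantel's theorem: if `ω ≥ 2` is the clique number of `G` (so `G` has an
`ω`-clique but is `K_{ω+1}`-free), then
`c_ω(G) ≤ (1/(ω-1)) · c_{ω-1}(G)² / 4`. -/
theorem clique_mantel {V : Type*} [Fintype V] [DecidableEq V]
    (G : SimpleGraph V) [DecidableRel G.Adj] (ω : ℕ) (hω : 2 ≤ ω)
    (hclique : (G.cliqueFinset ω).Nonempty) (hfree : G.CliqueFree (ω + 1)) :
    ((G.cliqueFinset ω).card : ℝ) ≤
      (1 / ((ω : ℝ) - 1)) * ((G.cliqueFinset (ω - 1)).card : ℝ) ^ 2 / 4 := by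
  obtain ⟨r, rfl⟩ : ∃ r, ω = r + 2 := ⟨ω - 2, by omega⟩
  have hfree' : G.CliqueFree (r+3) := hfree
  have hred : r + 2 - 1 = r + 1 := rfl
  rw [hred]
  set M := (G.cliqueFinset (r+2)).card with hM
  set N := (G.cliqueFinset (r+1)).card with hN
  have hMpos : 1 ≤ M := Finset.card_pos.2 hclique
  have hP : ∀ K ∈ G.cliqueFinset (r+2), (K.powersetCard (r+1)).card = r+2 := by
    intro K hK
    rw [Finset.card_powersetCard, (SimpleGraph.mem_cliqueFinset_iff.1 hK).card_eq,
      Nat.choose_succ_self_right]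
  obtain ⟨K₀, hK₀⟩ := hclique
  have hNge : r + 2 ≤ N := by
    have hsub : K₀.powersetCard (r+1) ⊆ G.cliqueFinset (r+1) := by
      rw [← cm_filter_eq_powersetCard hK₀]
      exact Finset.filter_subset _ _
    calc r + 2 = (K₀.powersetCard (r+1)).card := (hP K₀ hK₀).symm
      _ ≤ N := Finset.card_le_card hsub
  -- identity (a): Σ_S D(S) = (r+2)·M
  have hA : ∑ S ∈ G.cliqueFinset (r+1), cm_D G r S = M * (r+2) := by
    have h1 := cm_swap (G := G) (r := r) (fun _ => 1)
    simp only [mul_one] at h1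
    rw [h1]
    rw [Finset.sum_congr rfl (fun K hK => by
      rw [Finset.sum_const, smul_eq_mul, mul_one, cm_filter_eq_powersetCard hK, hP K hK])]
    rw [Finset.sum_const, smul_eq_mul]
  -- per-K bound
  have hperK : ∀ K ∈ G.cliqueFinset (r+2),
      (∑ S ∈ (G.cliqueFinset (r+1)).filter (fun S => S ⊆ K), cm_D G r S) * (r+1)
        ≤ N + r*(r+2) := by
    intro K hK
    rw [cm_filter_eq_powersetCard hK]
    have hDval : ∀ S ∈ K.powersetCard (r+1),
        cm_D G r S = ((cm_ext G r S).filter (fun v => v ∉ K)).card + 1 := by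
      intro S hS
      rw [cm_D_eq_ext (Finset.mem_powersetCard.1 hS).2]
      exact cm_ext_split hK hS
    rw [Finset.sum_congr rfl hDval, Finset.sum_add_distrib, Finset.sum_const, hP K hK,
      smul_eq_mul, mul_one, add_mul]
    have hkey := cm_key_count hfree' hK
    have hNsplit : (r+2)
        + ((G.cliqueFinset (r+1)).filter (fun T => ¬ T ⊆ K)).card = N := by
      rw [hN, ← Finset.card_filter_add_card_filter_not
        (s := G.cliqueFinset (r+1)) (p := fun T => T ⊆ K),
        cm_filter_eq_powersetCard hK, hP K hK]
    have hmul : (r+2)*(r+1) = r*(r+2) + (r+2) := by ring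
    omega
  -- bound (b): (Σ_S D(S)²)·(r+1) ≤ M·(N + r(r+2))
  have hB : (∑ S ∈ G.cliqueFinset (r+1), cm_D G r S * cm_D G r S) * (r+1)
      ≤ M * (N + r*(r+2)) := by
    rw [cm_swap (G := G) (r := r) (cm_D G r), Finset.sum_mul]
    calc ∑ K ∈ G.cliqueFinset (r+2),
          (∑ S ∈ (G.cliqueFinset (r+1)).filter (fun S => S ⊆ K), cm_D G r S) * (r+1)
        ≤ ∑ _K ∈ G.cliqueFinset (r+2), (N + r*(r+2)) := Finset.sum_le_sum hperK
      _ = M * (N + r*(r+2)) := by rw [Finset.sum_const, smul_eq_mul]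
  -- Cauchy–Schwarz
  have hCS : ((∑ S ∈ G.cliqueFinset (r+1), cm_D G r S : ℕ) : ℝ)^2
      ≤ (N : ℝ) * ((∑ S ∈ G.cliqueFinset (r+1), cm_D G r S * cm_D G r S : ℕ) : ℝ) := by
    push_cast
    have h := sq_sum_le_card_mul_sum_sq (s := G.cliqueFinset (r+1))
      (f := fun S => (cm_D G r S : ℝ))
    rw [← hN] at h
    calc (∑ S ∈ G.cliqueFinset (r+1), (cm_D G r S : ℝ))^2
        ≤ (N : ℝ) * ∑ S ∈ G.cliqueFinset (r+1), (cm_D G r S : ℝ)^2 := h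
      _ = (N : ℝ) * ∑ S ∈ G.cliqueFinset (r+1), (cm_D G r S : ℝ) * (cm_D G r S : ℝ) := by
          simp_rw [sq]
  -- assemble over ℝ
  have hAR : ((∑ S ∈ G.cliqueFinset (r+1), cm_D G r S : ℕ) : ℝ) = (M : ℝ) * ((r : ℝ)+2) := by
    rw [hA]; push_cast; ring
  have hBR : ((∑ S ∈ G.cliqueFinset (r+1), cm_D G r S * cm_D G r S : ℕ) : ℝ) * ((r : ℝ)+1)
      ≤ (M : ℝ) * ((N : ℝ) + (r : ℝ)*((r : ℝ)+2)) := by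
    exact_mod_cast hB
  have hMR : (1 : ℝ) ≤ (M : ℝ) := by exact_mod_cast hMpos
  have hNR : (r : ℝ) + 2 ≤ (N : ℝ) := by exact_mod_cast hNge
  have hr0 : (0 : ℝ) ≤ (r : ℝ) := Nat.cast_nonneg r
  have hN0 : (0 : ℝ) ≤ (N : ℝ) := Nat.cast_nonneg N
  set x : ℝ := ((∑ S ∈ G.cliqueFinset (r+1), cm_D G r S * cm_D G r S : ℕ) : ℝ) with hx
  have h1 : ((r : ℝ)+1) * (((M : ℝ)*((r : ℝ)+2))^2) ≤ ((r : ℝ)+1) * ((N : ℝ) * x) := by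
    rw [← hAR]
    exact mul_le_mul_of_nonneg_left hCS (by positivity)
  have h2 : (N : ℝ) * (x*((r : ℝ)+1)) ≤ (N : ℝ) * ((M : ℝ) * ((N : ℝ) + (r : ℝ)*((r : ℝ)+2))) :=
    mul_le_mul_of_nonneg_left hBR hN0
  have key : ((r : ℝ)+1) * ((r : ℝ)+2)^2 * (M : ℝ)^2
      ≤ (N : ℝ) * (M : ℝ) * ((N : ℝ) + (r : ℝ)*((r : ℝ)+2)) := by nlinarith [h1, h2, hx]
  have hMpos' : (0 : ℝ) < (M : ℝ) := by linarith
  have key2 : ((r : ℝ)+1) * ((r : ℝ)+2)^2 * (M : ℝ)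
      ≤ (N : ℝ) * ((N : ℝ) + (r : ℝ)*((r : ℝ)+2)) := by
    have h3 : (((r : ℝ)+1) * ((r : ℝ)+2)^2 * (M : ℝ)) * (M : ℝ)
        ≤ ((N : ℝ) * ((N : ℝ) + (r : ℝ)*((r : ℝ)+2))) * (M : ℝ) := by linarith [key]
    exact le_of_mul_le_mul_right h3 hMpos'
  -- final algebra
  have f1 : (0 : ℝ) ≤ (r : ℝ) * (N : ℝ) * (((r : ℝ)+4) * ((N : ℝ) - ((r : ℝ)+2))) := by
    have : (0 : ℝ) ≤ (N : ℝ) - ((r : ℝ)+2) := by linarith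
    positivity
  have f2 : (0 : ℝ) ≤ (r : ℝ) * (N : ℝ) * ((r : ℝ)*((r : ℝ)+2)) := by positivity
  have h5 : 4*((r : ℝ)+1)*(M : ℝ)*(((r : ℝ)+2)^2) ≤ (N : ℝ)^2*(((r : ℝ)+2)^2) := by
    linarith [key2, f1, f2]
  have hfinal : (M : ℝ) * (4*((r : ℝ)+1)) ≤ (N : ℝ)^2 := by
    have hpos : (0 : ℝ) < ((r : ℝ)+2)^2 := by positivity
    have h6 : ((M : ℝ) * (4*((r : ℝ)+1))) * (((r : ℝ)+2)^2)
        ≤ ((N : ℝ)^2) * (((r : ℝ)+2)^2) := by linarith [h5]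
    exact le_of_mul_le_mul_right h6 hpos
  have hcast : ((r + 2 : ℕ) : ℝ) - 1 = (r : ℝ) + 1 := by push_cast; ring
  rw [hcast]
  have hden : (0 : ℝ) < (r : ℝ) + 1 := by positivity
  have hform : (1 / ((r : ℝ)+1) * ((N : ℝ))^2) / 4 = (N : ℝ)^2 / (4*((r : ℝ)+1)) := by
    field_simp
  rw [hform, le_div_iff₀ (by positivity)]
  linarith [hfinal]
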